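/- arXiv:quant-ph/0702083 — 2 statements merged into one kernel-verified Lean document; each statement's English description precedes it below -/
import Mathlib

section
/- For a nonzero vector |ψ⟩ = Σ α_{k1...km} |k1⟩⊗...⊗|km⟩ in (ℂ^N)^{⊗m}, |ψ⟩ is fully separable (a tensor product of m vectors) if and only if for every j and all multi-indices k, l: α_{k1...km} α_{l1...lm} = α_{k1...k_{j-1} l_j k_{j+1}...km} α_{l1...l_{j-1} k_j l_{j+1}...lm}. -/
/-- A nonzero vector in `(ℂ^N)^{⊗ m}` with coefficients `α` is fully separable
iff the Segre relations hold for every slot `j`. -/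
theorem multipartite_separable_iff_segre (N m : ℕ) (hN : 1 ≤ N) (hm : 1 ≤ m)
    (α : (Fin m → Fin N) → ℂ) (hα : α ≠ 0) :
    (∃ v : Fin m → Fin N → ℂ, ∀ k : Fin m → Fin N, α k = ∏ j, v j (k j)) ↔
      (∀ (j : Fin m) (k l : Fin m → Fin N),
        α k * α l =
          α (Function.update k j (l j)) * α (Function.update l j (k j))) := by
  constructor
  · rintro ⟨v, hv⟩ j k l
    simp only [hv]
    rw [← Finset.prod_mul_distrib, ← Finset.prod_mul_distrib]
    refine Finset.prod_congr rfl fun i _ => ?_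
    by_cases hij : i = j
    · subst hij; simp [Function.update_self]; ring
    · simp [Function.update_of_ne hij]
  · intro hseg
    obtain ⟨k₀, hk₀⟩ : ∃ k₀, α k₀ ≠ 0 := by
      by_contra h
      push_neg at h
      exact hα (funext fun k => h k)
    have key : ∀ (k : Fin m → Fin N) (s : Finset (Fin m)),
        α (fun j => if j ∈ s then k j else k₀ j) * (α k₀) ^ s.card
          = (∏ j ∈ s, α (Function.update k₀ j (k j))) * α k₀ := by
      intro k s
      induction s using Finset.induction with
      | empty => simp
      | @insert j s hj ih =>
        have h1 : Function.update (fun j' => if j' ∈ s then k j' else k₀ j') j (k j)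
            = (fun j' => if j' ∈ insert j s then k j' else k₀ j') := by
          funext j'
          by_cases hj' : j' = j
          · subst hj'; simp
          · simp [Function.update_of_ne hj', hj']
        have hrel := hseg j (fun j' => if j' ∈ s then k j' else k₀ j')
          (Function.update k₀ j (k j))
        rw [Function.update_self, if_neg hj, h1] at hrel
        have h2 : Function.update (Function.update k₀ j (k j)) j (k₀ j) = k₀ := by
          funext j'
          by_cases hj' : j' = j
          · subst hj'; simp
          · simp [Function.update_of_ne hj']
        rw [h2] at hrel
        rw [Finset.card_insert_of_notMem hj, Finset.prod_insert hj, pow_succ]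
        calc α (fun j' => if j' ∈ insert j s then k j' else k₀ j')
              * ((α k₀) ^ s.card * α k₀)
            = (α (fun j' => if j' ∈ insert j s then k j' else k₀ j') * α k₀)
              * (α k₀) ^ s.card := by ring
          _ = (α (fun j' => if j' ∈ s then k j' else k₀ j')
              * α (Function.update k₀ j (k j))) * (α k₀) ^ s.card := by rw [← hrel]
          _ = α (Function.update k₀ j (k j))
              * (α (fun j' => if j' ∈ s then k j' else k₀ j') * (α k₀) ^ s.card) := by ring
          _ = α (Function.update k₀ j (k j))
              * ((∏ j ∈ s, α (Function.update k₀ j (k j))) * α k₀) := by rw [ih]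
          _ = α (Function.update k₀ j (k j)) * (∏ j ∈ s, α (Function.update k₀ j (k j)))
              * α k₀ := by ring
    have key' : ∀ k : Fin m → Fin N,
        α k * (α k₀) ^ (m - 1) = ∏ j, α (Function.update k₀ j (k j)) := by
      intro k
      have h := key k Finset.univ
      simp only [Finset.mem_univ, if_true, Finset.card_univ, Fintype.card_fin] at h
      have hm' : m = (m - 1) + 1 := (Nat.succ_pred_eq_of_pos hm).symm
      have hpow : α k₀ ^ m = α k₀ ^ (m - 1) * α k₀ := by
        conv_lhs => rw [hm']
        rw [pow_succ]
      rw [hpow, ← mul_assoc] at h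
      exact mul_right_cancel₀ hk₀ h
    set j₀ : Fin m := ⟨0, hm⟩ with hj₀
    refine ⟨fun j i => if j = j₀ then α (Function.update k₀ j i)
      else α (Function.update k₀ j i) / α k₀, fun k => ?_⟩
    have hmem : j₀ ∈ (Finset.univ : Finset (Fin m)) := Finset.mem_univ _
    rw [← Finset.mul_prod_erase Finset.univ _ hmem]
    beta_reduce
    rw [if_pos rfl]
    have herase : ∀ j ∈ Finset.univ.erase j₀,
        (if j = j₀ then α (Function.update k₀ j (k j))
          else α (Function.update k₀ j (k j)) / α k₀)
        = α (Function.update k₀ j (k j)) / α k₀ := by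
      intro j hj
      rw [if_neg (Finset.ne_of_mem_erase hj)]
    rw [Finset.prod_congr rfl herase, Finset.prod_div_distrib, Finset.prod_const,
      Finset.card_erase_of_mem hmem, Finset.card_univ, Fintype.card_fin]
    have kk := key' k
    rw [← Finset.mul_prod_erase Finset.univ _ hmem] at kk
    have hpow : (α k₀ : ℂ) ^ (m - 1) ≠ 0 := pow_ne_zero _ hk₀
    field_simp
    linear_combination kk
end

section
/- Let α : Fin N × Fin N → ℂ and let R be the N²×N² matrix whose (1,1) entry is α_{11}, whose (N²,N²) entry is α_{NN}, and whose remaining nonzero entries are the anti-diagonal entries given by the remaining coefficients α_{kl} in reverse lexicographic order. If α satisfies α_{k1 k2} α_{l1 l2} ≠ α_{k1 l2} α_{l1 k2} for some indices, then R((Σ_k e_k) ⊗ (Σ_l e_l)) = Σ_{k,l} α_{kl} e_k ⊗ e_l is an entangled (non-product) state. -/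
/-- The `N²×N²` gate `R = R^d + R^{ad}` (with `α₁₁`, `α_{NN}` in the corners of
the diagonal and the remaining coefficients on the anti-diagonal, arranged so
that `R` maps the uniform product vector to `Σ α_{kl} e_k ⊗ e_l`) produces an
entangled (non-product) state whenever some Segre relation fails. -/
theorem gate_entangler_produces_entangled_state (N : ℕ) (hN : 1 ≤ N)
    (α : Fin N × Fin N → ℂ)
    (R : Matrix (Fin N × Fin N) (Fin N × Fin N) ℂ)
    (hR : R = fun p q =>
      if (p.1.val = 0 ∧ p.2.val = 0) ∨ (p.1.val = N - 1 ∧ p.2.val = N - 1) then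
        (if q = p then α p else 0)
      else
        (if q.1.val = N - 1 - p.1.val ∧ q.2.val = N - 1 - p.2.val then α p
         else 0))
    (h : ∃ k1 k2 l1 l2 : Fin N,
      α (k1, k2) * α (l1, l2) ≠ α (k1, l2) * α (l1, k2)) :
    R.mulVec (fun _ : Fin N × Fin N => 1) = (fun p => α p) ∧
      ¬ ∃ u v : Fin N → ℂ, ∀ k l : Fin N,
          R.mulVec (fun _ : Fin N × Fin N => 1) (k, l) = u k * v l := by
  have hmv : R.mulVec (fun _ : Fin N × Fin N => 1) = (fun p => α p) := by
    funext p
    simp only [Matrix.mulVec, dotProduct, hR, mul_one]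
    by_cases hp : (p.1.val = 0 ∧ p.2.val = 0) ∨ (p.1.val = N - 1 ∧ p.2.val = N - 1)
    · simp [hp, Finset.sum_ite_eq]
    · simp only [hp, if_false]
      have h1 : N - 1 - p.1.val < N := by omega
      have h2 : N - 1 - p.2.val < N := by omega
      have key : ∀ q : Fin N × Fin N,
          (q.1.val = N - 1 - p.1.val ∧ q.2.val = N - 1 - p.2.val) ↔
            q = (⟨N - 1 - p.1.val, h1⟩, ⟨N - 1 - p.2.val, h2⟩) := by
        intro q
        constructor
        · rintro ⟨ha, hb⟩
          exact Prod.ext (Fin.ext ha) (Fin.ext hb)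
        · rintro rfl; exact ⟨rfl, rfl⟩
      simp only [key]
      simp
  refine ⟨hmv, ?_⟩
  rintro ⟨u, v, huv⟩
  obtain ⟨k1, k2, l1, l2, hne⟩ := h
  apply hne
  rw [hmv] at huv
  simp only at huv
  rw [huv, huv, huv, huv]
  ring
end
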